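/- Let F be a field of characteristic 0, let A = ⊕_{i∈ℕ} ℤ be the free abelian group on basis ε_1, ε_2, …, let T be the F-vector space with basis ∂_1, ∂_2, …, and let φ : T × A → F be the map F-linear in the first variable and additive in the second determined by φ(∂_i, ε_j) = δ_{ij}; let W_∞ = W(A,T,φ) be the corresponding simple generalized Witt algebra. Let s : A → A be the injective group endomorphism determined by s(ε_i) = ε_{i+1} for all i ∈ ℕ. Then the F-linear map Φ : W_∞ → W_∞ determined by Φ(t^α ∂_i) = t^{s(α)} ∂_{i+1} for all α ∈ A and i ∈ ℕ is both a local automorphism and a 2-local automorphism of W_∞, but Φ is not surjective; in particular, Φ is not a Lie algebra automorphism of W_∞. -/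

import Mathlib

/-! Generalized Witt algebras `W(A,T,φ)` over a field `F` of characteristic `0`,
following Djokovic-Zhao. Here `A` is an (additive) abelian group, `T` an
`F`-vector space, and `φ : T × A → F` is `F`-linear in the first variable and
additive in the second (encoded as `φ : T →ₗ[F] (A →+ F)`). -/

namespace GW

variable {F : Type*} [Field F]
variable {A : Type*} [AddCommGroup A]
variable {T : Type*} [AddCommGroup T] [Module F T]
variable (φ : T →ₗ[F] (A →+ F))

/-- The bracket on finitely supported functions `A →₀ T`: the bilinear extension of
`[t^α a, t^β b] = t^(α+β) (φ a β • b - φ b α • a)`. -/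
noncomputable def brk (x y : A →₀ T) : A →₀ T :=
  x.sum fun α a => y.sum fun β b => Finsupp.single (α + β) (φ a β • b - φ b α • a)

lemma brk_zero_left (y : A →₀ T) : brk φ 0 y = 0 := by
  simp [brk]

lemma brk_zero_right (x : A →₀ T) : brk φ x 0 = 0 := by
  simp [brk]

lemma brk_single_single (α β : A) (a b : T) :
    brk φ (Finsupp.single α a) (Finsupp.single β b)
      = Finsupp.single (α + β) (φ a β • b - φ b α • a) := by
  unfold brk
  rw [Finsupp.sum_single_index, Finsupp.sum_single_index]
  · simp
  · simp

lemma brk_add_left (x x' y : A →₀ T) : brk φ (x + x') y = brk φ x y + brk φ x' y := by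
  unfold brk
  rw [Finsupp.sum_add_index']
  · intro α; simp
  · intro α a a'
    rw [← Finsupp.sum_add]
    congr 1
    funext β b
    rw [← Finsupp.single_add]
    congr 1
    simp only [map_add, LinearMap.add_apply, AddMonoidHom.add_apply, add_smul, smul_add]
    abel

lemma brk_add_right (x y y' : A →₀ T) : brk φ x (y + y') = brk φ x y + brk φ x y' := by
  unfold brk
  rw [← Finsupp.sum_add]
  congr 1
  funext α a
  rw [Finsupp.sum_add_index']
  · intro β; simp
  · intro β b b'
    rw [← Finsupp.single_add]
    congr 1
    simp only [map_add, LinearMap.add_apply, AddMonoidHom.add_apply, add_smul, smul_add]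
    abel

lemma brk_neg_swap (x y : A →₀ T) : brk φ y x = - brk φ x y := by
  unfold brk
  rw [Finsupp.sum_comm]
  rw [← Finsupp.sum_neg]
  congr 1
  funext α a
  rw [← Finsupp.sum_neg]
  congr 1
  funext β b
  rw [← Finsupp.single_neg, add_comm β α]
  congr 1
  abel

lemma brk_smul_right (c : F) (x y : A →₀ T) : brk φ x (c • y) = c • brk φ x y := by
  unfold brk
  rw [Finsupp.smul_sum]
  congr 1
  funext α a
  rw [Finsupp.sum_smul_index', Finsupp.smul_sum]
  · congr 1
    funext β b
    rw [Finsupp.smul_single]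
    congr 1
    simp only [map_smul, LinearMap.smul_apply, AddMonoidHom.smul_apply, smul_sub, smul_smul,
      smul_eq_mul]
    rw [mul_comm]
  · intro β; simp

lemma brk_self [CharZero F] (x : A →₀ T) : brk φ x x = 0 := by
  have h : brk φ x x = -brk φ x x := brk_neg_swap φ x x
  have h2 : (2 : F) • brk φ x x = 0 := by
    rw [two_smul]
    nth_rewrite 2 [h]
    simp
  calc brk φ x x = (2 : F)⁻¹ • ((2 : F) • brk φ x x) :=
        (inv_smul_smul₀ two_ne_zero _).symm
    _ = 0 := by rw [h2, smul_zero]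

lemma brk_leibniz (x y z : A →₀ T) :
    brk φ x (brk φ y z) = brk φ (brk φ x y) z + brk φ y (brk φ x z) := by
  induction x using Finsupp.induction_linear with
  | zero => simp [brk_zero_left, brk_zero_right]
  | add f g hf hg =>
      simp only [brk_add_left, brk_add_right, hf, hg]; abel
  | single α a =>
    induction y using Finsupp.induction_linear with
    | zero => simp [brk_zero_left, brk_zero_right]
    | add f g hf hg =>
        simp only [brk_add_left, brk_add_right, hf, hg]; abel
    | single β b =>
      induction z using Finsupp.induction_linear with
      | zero => simp [brk_zero_left, brk_zero_right]
      | add f g hf hg =>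
          simp only [brk_add_left, brk_add_right, hf, hg]; abel
      | single γ c =>
        rw [brk_single_single, brk_single_single, brk_single_single, brk_single_single,
          brk_single_single, brk_single_single]
        rw [show β + (α + γ) = α + β + γ by abel, show α + (β + γ) = α + β + γ by abel,
          ← Finsupp.single_add]
        congr 1
        simp only [map_add, map_sub, map_smul, LinearMap.sub_apply, LinearMap.smul_apply,
          AddMonoidHom.add_apply, AddMonoidHom.sub_apply, AddMonoidHom.smul_apply,
          smul_eq_mul, smul_sub, sub_smul, add_smul, smul_smul]
        ring_nf
        module

variable (F A T) in
/-- The carrier of the generalized Witt algebra `W(A,T,φ)`: finitely supported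
functions from `A` to `T`, where `t^α ∂` corresponds to the function supported
at `α` with value `∂`. -/
@[nolint unusedArguments]
def W (_φ : T →ₗ[F] (A →+ F)) : Type _ := A →₀ T

noncomputable instance : AddCommGroup (W F A T φ) := inferInstanceAs (AddCommGroup (A →₀ T))

noncomputable instance : Module F (W F A T φ) := inferInstanceAs (Module F (A →₀ T))

/-- The element `t^α ∂` of the generalized Witt algebra. -/
noncomputable def tt (α : A) (d : T) : W F A T φ := Finsupp.single α d

/-- The underlying finitely supported function of an element of `W(A,T,φ)`. -/
def toF (x : W F A T φ) : A →₀ T := x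

/-- The Lie ring structure on the generalized Witt algebra `W(A,T,φ)`, with bracket
determined by `[t^α ∂, t^β ∂'] = t^(α+β) (φ(∂,β) • ∂' - φ(∂',α) • ∂)`. -/
noncomputable instance [CharZero F] : LieRing (W F A T φ) :=
  { (inferInstance : AddCommGroup (A →₀ T)) with
    bracket := fun x y => brk φ (toF φ x) (toF φ y)
    add_lie := fun x y z => brk_add_left φ x y z
    lie_add := fun x y z => brk_add_right φ x y z
    lie_self := fun x => brk_self φ x
    leibniz_lie := fun x y z => brk_leibniz φ x y z }

/-- The generalized Witt algebra `W(A,T,φ)` as a Lie algebra over `F`. -/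
noncomputable instance [CharZero F] : LieAlgebra F (W F A T φ) :=
  { (inferInstance : Module F (A →₀ T)) with
    lie_smul := fun c x y => brk_smul_right φ c x y }

@[simp] theorem bracket_tt [CharZero F] (α β : A) (a b : T) :
    ⁅tt φ α a, tt φ β b⁆ = tt φ (α + β) (φ a β • b - φ b α • a) :=
  brk_single_single φ α β a b

/-- Nondegeneracy of the map `φ`. -/
def Nondeg : Prop :=
  (∀ α : A, (∀ d : T, φ d α = 0) → α = 0) ∧ (∀ d : T, (∀ α : A, φ d α = 0) → d = 0)

/-- `(A', T')` is a nondegenerate pair for `φ`. -/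
def NondegPair (A' : AddSubgroup A) (T' : Submodule F T) : Prop :=
  (∀ d ∈ T', (∀ α ∈ A', φ d α = 0) → d = 0) ∧
  (∀ α ∈ A', (∀ d ∈ T', φ d α = 0) → α = 0)

/-- The subset (in fact Lie subalgebra) of `W(A,T,φ)` consisting of the finitely
supported functions supported in `A'` with values in `T'`. -/
def supportedIn (A' : AddSubgroup A) (T' : Submodule F T) : Set (W F A T φ) :=
  {x | (∀ α : A, toF φ x α ∈ T') ∧ ∀ α : A, α ∉ A' → toF φ x α = 0}

end GW

/-- The pairing `φ(∂, α) = Σ_i ∂_i α_i` on `(ℕ →₀ F) × (ℕ →₀ ℤ)`, i.e. the map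
determined by `φ(∂_i, ε_j) = δ_ij`. -/
noncomputable def phiInf (F : Type*) [Field F] :
    (ℕ →₀ F) →ₗ[F] ((ℕ →₀ ℤ) →+ F) where
  toFun d :=
  { toFun := fun α => d.sum fun i c => c * (α i : F)
    map_zero' := by simp
    map_add' := by
      intro α β
      simp only [Finsupp.add_apply, Int.cast_add, mul_add]
      exact Finsupp.sum_add }
  map_add' d d' := by
    refine AddMonoidHom.ext fun α => ?_
    simp only [AddMonoidHom.coe_mk, ZeroHom.coe_mk, AddMonoidHom.add_apply]
    exact Finsupp.sum_add_index' (fun i => by simp) (fun i b₁ b₂ => by ring)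
  map_smul' c d := by
    refine AddMonoidHom.ext fun α => ?_
    simp only [AddMonoidHom.coe_mk, ZeroHom.coe_mk, RingHom.id_apply,
      AddMonoidHom.smul_apply, smul_eq_mul]
    rw [Finsupp.sum_smul_index' (fun i => by simp), Finsupp.mul_sum]
    exact Finsupp.sum_congr fun i _ => by simp [smul_eq_mul]; ring

/-- The generalized Witt algebra `W_∞ = W(⊕_{i∈ℕ} ℤ, ⊕_{i∈ℕ} F, φ)` with
`φ(∂_i, ε_j) = δ_ij`, where `ε_i` (resp. `∂_i`) is `Finsupp.single i 1`. -/
noncomputable abbrev WInf (F : Type*) [Field F] : Type _ :=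
  GW.W F (ℕ →₀ ℤ) (ℕ →₀ F) (phiInf F)

section ShiftAux

variable (F : Type*) [Field F]

def cyc (n : ℕ) : ℕ ≃ ℕ where
  toFun i := if i < n then i + 1 else if i = n then 0 else i
  invFun j := if j = 0 then n else if j ≤ n then j - 1 else j
  left_inv i := by
    dsimp only
    by_cases h1 : i < n
    · rw [if_pos h1, if_neg (by omega), if_pos (by omega)]; omega
    · by_cases h2 : i = n
      · rw [if_neg h1, if_pos h2, if_pos rfl]; omega
      · rw [if_neg h1, if_neg h2, if_neg (by omega), if_neg (by omega)]
  right_inv j := by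
    dsimp only
    by_cases h1 : j = 0
    · rw [if_pos h1, if_neg (by omega), if_pos rfl]; omega
    · by_cases h2 : j ≤ n
      · rw [if_neg h1, if_pos h2, if_pos (by omega)]; omega
      · rw [if_neg h1, if_neg h2, if_neg (by omega), if_neg (by omega)]

lemma cyc_lt (n i : ℕ) (h : i < n) : cyc n i = i + 1 := by simp [cyc, h]

lemma phiInf_apply (d : ℕ →₀ F) (α : ℕ →₀ ℤ) :
    phiInf F d α = d.sum fun i c => c * (α i : F) := rfl

lemma lcongr_refl_eq (π : ℕ ≃ ℕ) (a : ℕ →₀ F) :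
    Finsupp.lcongr π (LinearEquiv.refl F F) a = Finsupp.equivMapDomain π a := by
  ext k
  simp [Finsupp.lcongr_apply_apply, Finsupp.equivMapDomain_apply]

lemma phi_perm (π : ℕ ≃ ℕ) (a : ℕ →₀ F) (β : ℕ →₀ ℤ) :
    phiInf F (Finsupp.lcongr π (LinearEquiv.refl F F) a) (Finsupp.equivMapDomain π β)
      = phiInf F a β := by
  rw [lcongr_refl_eq, phiInf_apply, phiInf_apply, Finsupp.equivMapDomain_eq_mapDomain (f := π) a,
    Finsupp.sum_mapDomain_index (by simp) (fun i c c' => by ring)]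
  exact Finsupp.sum_congr fun i _ => by
    simp [Finsupp.equivMapDomain_apply]

end ShiftAux

section WittAuto

open Finsupp GW

variable (F : Type*) [Field F] [CharZero F]

/-- The linear equivalence of `W_∞` induced by a permutation `π` of `ℕ`. -/
noncomputable def wle (π : ℕ ≃ ℕ) : WInf F ≃ₗ[F] WInf F :=
  Finsupp.lcongr (Finsupp.equivCongrLeft (M := ℤ) π) (Finsupp.lcongr π (LinearEquiv.refl F F))

lemma wle_single (π : ℕ ≃ ℕ) (α : ℕ →₀ ℤ) (a : ℕ →₀ F) :
    wle F π (GW.tt (phiInf F) α a)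
      = GW.tt (phiInf F) (Finsupp.equivMapDomain π α)
          (Finsupp.lcongr π (LinearEquiv.refl F F) a) := by
  show Finsupp.lcongr _ _ (Finsupp.single α a) = Finsupp.single _ _
  rw [Finsupp.lcongr_single]
  rfl

lemma bracket_def (x y : WInf F) :
    ⁅x, y⁆ = GW.brk (phiInf F) (GW.toF (phiInf F) x) (GW.toF (phiInf F) y) := rfl

lemma wle_bracket (π : ℕ ≃ ℕ) (x y : WInf F) :
    wle F π ⁅x, y⁆ = ⁅wle F π x, wle F π y⁆ := by
  induction x using Finsupp.induction_linear with
  | zero =>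
      rw [show ((0 : (ℕ →₀ ℤ) →₀ (ℕ →₀ F)) : WInf F) = (0 : WInf F) from rfl]
      erw [zero_lie, map_zero]
      exact rfl
  | add f g hf hg =>
      rw [show ((f + g : (ℕ →₀ ℤ) →₀ (ℕ →₀ F)) : WInf F) = (f : WInf F) + g from rfl]
      erw [add_lie, map_add, map_add, add_lie, hf, hg]
      exact rfl
  | single α a =>
    induction y using Finsupp.induction_linear with
    | zero => rw [show ((0 : (ℕ →₀ ℤ) →₀ (ℕ →₀ F)) : WInf F) = (0 : WInf F) from rfl]
              erw [@lie_zero (WInf F) (WInf F) _ _ lieRingSelfModule, map_zero,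
                @lie_zero (WInf F) (WInf F) _ _ lieRingSelfModule]
              exact rfl
    | add f g hf hg =>
        have key : ∀ x u v : WInf F, wle F π ⁅x, u⁆ = ⁅wle F π x, wle F π u⁆ →
            wle F π ⁅x, v⁆ = ⁅wle F π x, wle F π v⁆ →
            wle F π ⁅x, u + v⁆ = ⁅wle F π x, wle F π (u + v)⁆ := by
          intro x u v hu hv
          calc wle F π ⁅x, u + v⁆ = wle F π (⁅x, u⁆ + ⁅x, v⁆) :=
                congrArg _ (@lie_add (WInf F) (WInf F) _ _ lieRingSelfModule x u v)
            _ = wle F π ⁅x, u⁆ + wle F π ⁅x, v⁆ := map_add _ _ _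
            _ = ⁅wle F π x, wle F π u⁆ + ⁅wle F π x, wle F π v⁆ := by rw [hu, hv]
            _ = ⁅wle F π x, wle F π u + wle F π v⁆ :=
                (@lie_add (WInf F) (WInf F) _ _ lieRingSelfModule _ _ _).symm
            _ = ⁅wle F π x, wle F π (u + v)⁆ := by rw [map_add]
        exact key _ f g hf hg
    | single β b =>
        rw [show (Finsupp.single α a : WInf F) = GW.tt (phiInf F) α a from rfl,
          show (Finsupp.single β b : WInf F) = GW.tt (phiInf F) β b from rfl,
          GW.bracket_tt, wle_single, wle_single, wle_single, GW.bracket_tt]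
        rw [show Finsupp.equivMapDomain π (α + β)
            = Finsupp.equivMapDomain π α + Finsupp.equivMapDomain π β from
          (Finsupp.domCongr (M := ℤ) π).map_add α β]
        congr 1
        rw [map_sub, map_smul, map_smul, phi_perm, phi_perm]

/-- The Lie algebra automorphism of `W_∞` induced by a permutation `π` of `ℕ`. -/
noncomputable def wittAuto (π : ℕ ≃ ℕ) : WInf F ≃ₗ⁅F⁆ WInf F :=
  { toLieHom :=
      { toLinearMap := (wle F π).toLinearMap
        map_lie' := fun {x y} => wle_bracket F π x y }
    invFun := (wle F π).symm
    left_inv := (wle F π).left_inv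
    right_inv := (wle F π).right_inv }

lemma wittAuto_apply (π : ℕ ≃ ℕ) (x : WInf F) : wittAuto F π x = wle F π x := rfl

end WittAuto


section ShiftAgree

open Finsupp GW

variable {F : Type*} [Field F] [CharZero F]
variable (s : (ℕ →₀ ℤ) →+ (ℕ →₀ ℤ))
variable (Φ : WInf F →ₗ[F] WInf F)

lemma single_eq_smul (j : ℕ) (c : F) :
    (Finsupp.single j c : ℕ →₀ F) = c • Finsupp.single j (1 : F) := by
  rw [Finsupp.smul_single' c j 1, mul_one]

lemma Phi_single
    (hΦ : ∀ (α : ℕ →₀ ℤ) (i : ℕ),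
      Φ (GW.tt (phiInf F) α (Finsupp.single i (1 : F)))
        = GW.tt (phiInf F) (s α) (Finsupp.single (i + 1) (1 : F)))
    (α : ℕ →₀ ℤ) (j : ℕ) (c : F) :
    Φ (GW.tt (phiInf F) α (Finsupp.single j c))
      = GW.tt (phiInf F) (s α) (Finsupp.single (j + 1) c) := by
  have h1 : GW.tt (phiInf F) α (Finsupp.single j c)
      = c • GW.tt (phiInf F) α (Finsupp.single j (1 : F)) := by
    show (Finsupp.single α (Finsupp.single j c) : (ℕ →₀ ℤ) →₀ (ℕ →₀ F))
      = c • Finsupp.single α (Finsupp.single j (1 : F))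
    rw [Finsupp.smul_single, ← single_eq_smul]
  have h2 : GW.tt (phiInf F) (s α) (Finsupp.single (j + 1) c)
      = c • GW.tt (phiInf F) (s α) (Finsupp.single (j + 1) (1 : F)) := by
    show (Finsupp.single (s α) (Finsupp.single (j+1) c) : (ℕ →₀ ℤ) →₀ (ℕ →₀ F))
      = c • Finsupp.single (s α) (Finsupp.single (j+1) (1 : F))
    rw [Finsupp.smul_single, ← single_eq_smul]
  rw [h1, map_smul, hΦ, h2]

lemma s_bounded (hs : ∀ i : ℕ, s (Finsupp.single i 1) = Finsupp.single (i + 1) 1)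
    (n : ℕ) (α : ℕ →₀ ℤ) (hb : ∀ j ∈ α.support, j < n) :
    s α = Finsupp.equivMapDomain (cyc n) α := by
  conv_lhs => rw [← Finsupp.sum_single α]
  rw [map_finsuppSum, Finsupp.equivMapDomain_eq_mapDomain]
  rw [show Finsupp.mapDomain (cyc n) α = α.sum fun j c => Finsupp.single ((cyc n) j) c from rfl]
  refine Finsupp.sum_congr fun j hj => ?_
  rw [cyc_lt n j (hb j hj)]
  have : (Finsupp.single j (α j) : ℕ →₀ ℤ) = (α j) • Finsupp.single j (1 : ℤ) := by
    rw [Finsupp.smul_single' (α j) j 1, mul_one]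
  rw [this, map_zsmul, hs j, Finsupp.smul_single' (α j) (j+1) 1, mul_one]

/-- `x ∈ W_∞` only involves indices `< n`. -/
def BndB (n : ℕ) (x : (ℕ →₀ ℤ) →₀ (ℕ →₀ F)) : Prop :=
  ∀ α ∈ x.support, (∀ j ∈ α.support, j < n) ∧ ∀ j ∈ (x α).support, j < n

lemma BndB_mono {n m : ℕ} (h : n ≤ m) {x : (ℕ →₀ ℤ) →₀ (ℕ →₀ F)} (hb : BndB n x) :
    BndB m x := fun α hα =>
  ⟨fun j hj => lt_of_lt_of_le ((hb α hα).1 j hj) h,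
   fun j hj => lt_of_lt_of_le ((hb α hα).2 j hj) h⟩

lemma exists_BndB (x : (ℕ →₀ ℤ) →₀ (ℕ →₀ F)) : ∃ n, BndB n x := by
  refine ⟨(x.support.sup fun α => (α.support ∪ (x α).support).sup id) + 1, fun α hα => ?_⟩
  constructor
  · intro j hj
    have h1 : id j ≤ (α.support ∪ (x α).support).sup id :=
      Finset.le_sup (Finset.mem_union_left _ hj)
    have h2 : (α.support ∪ (x α).support).sup id
        ≤ x.support.sup fun α => (α.support ∪ (x α).support).sup id :=
      Finset.le_sup (f := fun α => (α.support ∪ (x α).support).sup id) hα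
    simp only [id] at h1; omega
  · intro j hj
    have h1 : id j ≤ (α.support ∪ (x α).support).sup id :=
      Finset.le_sup (Finset.mem_union_right _ hj)
    have h2 : (α.support ∪ (x α).support).sup id
        ≤ x.support.sup fun α => (α.support ∪ (x α).support).sup id :=
      Finset.le_sup (f := fun α => (α.support ∪ (x α).support).sup id) hα
    simp only [id] at h1; omega

lemma Phi_eq_wle
    (hs : ∀ i : ℕ, s (Finsupp.single i 1) = Finsupp.single (i + 1) 1)
    (hΦ : ∀ (α : ℕ →₀ ℤ) (i : ℕ),
      Φ (GW.tt (phiInf F) α (Finsupp.single i (1 : F)))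
        = GW.tt (phiInf F) (s α) (Finsupp.single (i + 1) (1 : F)))
    (n : ℕ) (x : WInf F) (hb : BndB n (GW.toF (phiInf F) x)) :
    Φ x = wle F (cyc n) x := by
  have hx : x = (GW.toF (phiInf F) x).sum fun α v =>
      (Finsupp.single α v : (ℕ →₀ ℤ) →₀ (ℕ →₀ F)) := (Finsupp.sum_single _).symm
  rw [hx]; erw [map_finsuppSum, map_finsuppSum]
  refine Finsupp.sum_congr fun α hα => ?_
  obtain ⟨hbα, hbv⟩ := hb α hα
  set v := GW.toF (phiInf F) x α with hv
  have hsingle : (Finsupp.single α v : WInf F)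
      = v.sum fun j c => GW.tt (phiInf F) α (Finsupp.single j c) := by
    show Finsupp.single α v = v.sum fun j c =>
      (Finsupp.single α (Finsupp.single j c) : (ℕ →₀ ℤ) →₀ (ℕ →₀ F))
    calc Finsupp.single α v
        = Finsupp.lsingle (R := F) α (v.sum fun j c => Finsupp.single j c) := by
          rw [Finsupp.sum_single]; rfl
      _ = v.sum fun j c => Finsupp.lsingle (R := F) α (Finsupp.single j c) :=
          map_finsuppSum _ _ _
      _ = v.sum fun j c => Finsupp.single α (Finsupp.single j c) := by
          simp only [Finsupp.lsingle_apply]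
  rw [hsingle, map_finsuppSum, map_finsuppSum]
  refine Finsupp.sum_congr fun j hj => ?_
  rw [Phi_single s Φ hΦ, wle_single, s_bounded s hs n α hbα]
  congr 1
  rw [lcongr_refl_eq, Finsupp.equivMapDomain_single, cyc_lt n j (hbv j hj)]

/-- Evaluation `x ↦ (x 0) 0` as a linear functional on `W_∞`. -/
noncomputable def Eval (F : Type*) [Field F] [CharZero F] : WInf F →ₗ[F] F :=
  (Finsupp.lapply (0 : ℕ)).comp (Finsupp.lapply (M := ℕ →₀ F) (R := F) (0 : ℕ →₀ ℤ))

lemma Eval_apply (x : WInf F) : Eval F x = (GW.toF (phiInf F) x) 0 0 := rfl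

lemma Eval_Phi
    (hΦ : ∀ (α : ℕ →₀ ℤ) (i : ℕ),
      Φ (GW.tt (phiInf F) α (Finsupp.single i (1 : F)))
        = GW.tt (phiInf F) (s α) (Finsupp.single (i + 1) (1 : F)))
    (x : WInf F) : Eval F (Φ x) = 0 := by
  induction x using Finsupp.induction_linear with
  | zero =>
      rw [show ((0 : (ℕ →₀ ℤ) →₀ (ℕ →₀ F)) : WInf F) = (0 : WInf F) from rfl,
        map_zero, map_zero]
  | add f g hf hg =>
      erw [show ((f + g : (ℕ →₀ ℤ) →₀ (ℕ →₀ F)) : WInf F) = (f : WInf F) + g from rfl,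
        map_add, map_add, hf, hg, add_zero]
  | single α v =>
      induction v using Finsupp.induction_linear with
      | zero =>
          rw [show (Finsupp.single α (0 : ℕ →₀ F) : WInf F) = (0 : WInf F) by
              show Finsupp.single α (0 : ℕ →₀ F) = 0; exact Finsupp.single_zero α,
            map_zero, map_zero]
      | add f g hf hg =>
          erw [show (Finsupp.single α (f + g) : WInf F)
                = (Finsupp.single α f : WInf F) + (Finsupp.single α g : WInf F) by
              show Finsupp.single α (f + g) = Finsupp.single α f + Finsupp.single α g
              exact Finsupp.single_add α f g,
            map_add, map_add, hf, hg, add_zero]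
      | single j c =>
          rw [show (Finsupp.single α (Finsupp.single j c) : WInf F)
              = GW.tt (phiInf F) α (Finsupp.single j c) from rfl,
            Phi_single s Φ hΦ, Eval_apply]
          show (Finsupp.single (s α) (Finsupp.single (j + 1) c) : (ℕ →₀ ℤ) →₀ (ℕ →₀ F)) 0 0 = 0
          rw [Finsupp.single_apply]
          split_ifs with h
          · rw [Finsupp.single_apply, if_neg (by omega)]
          · rfl

lemma Eval_tt : Eval F (GW.tt (phiInf F) 0 (Finsupp.single 0 (1 : F))) = 1 := by
  rw [Eval_apply]
  show (Finsupp.single (0 : ℕ →₀ ℤ) (Finsupp.single 0 (1 : F)) : (ℕ →₀ ℤ) →₀ (ℕ →₀ F)) 0 0 = 1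
  rw [Finsupp.single_eq_same, Finsupp.single_eq_same]

end ShiftAgree

/-- Remark 3.4: on `W_∞`, the linear map `Φ` determined by
`Φ(t^α ∂_i) = t^(s α) ∂_(i+1)`, where `s` is the injective endomorphism of
`⊕_{i∈ℕ} ℤ` determined by `s(ε_i) = ε_(i+1)`, is both a local automorphism and a
`2`-local automorphism of `W_∞`, but it is not surjective; in particular it is not a
Lie algebra automorphism of `W_∞`. -/
theorem winf_shift_is_local_and_twoLocal_but_not_aut
    (F : Type*) [Field F] [CharZero F]
    (s : (ℕ →₀ ℤ) →+ (ℕ →₀ ℤ))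
    (hs : ∀ i : ℕ, s (Finsupp.single i 1) = Finsupp.single (i + 1) 1)
    (Φ : WInf F →ₗ[F] WInf F)
    (hΦ : ∀ (α : ℕ →₀ ℤ) (i : ℕ),
      Φ (GW.tt (phiInf F) α (Finsupp.single i (1 : F)))
        = GW.tt (phiInf F) (s α) (Finsupp.single (i + 1) (1 : F))) :
    (∀ x : WInf F, ∃ θ : WInf F ≃ₗ⁅F⁆ WInf F, Φ x = θ x) ∧
    (∀ x y : WInf F, ∃ θ : WInf F ≃ₗ⁅F⁆ WInf F, Φ x = θ x ∧ Φ y = θ y) ∧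
    ¬ Function.Surjective ⇑Φ ∧
    ¬ ∃ θ : WInf F ≃ₗ⁅F⁆ WInf F, ⇑θ = ⇑Φ := by
  have key : ∀ x : WInf F, ∀ n, BndB n (GW.toF (phiInf F) x) → Φ x = wittAuto F (cyc n) x :=
    fun x n hb => (Phi_eq_wle s Φ hs hΦ n x hb).trans (wittAuto_apply F (cyc n) x).symm
  have notsurj : ¬ Function.Surjective ⇑Φ := by
    intro h
    obtain ⟨x, hx⟩ := h (GW.tt (phiInf F) 0 (Finsupp.single 0 (1 : F)))
    have h1 := Eval_Phi s Φ hΦ x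
    rw [hx, Eval_tt] at h1
    exact one_ne_zero h1
  refine ⟨?_, ?_, notsurj, ?_⟩
  · intro x
    obtain ⟨n, hb⟩ := exists_BndB (GW.toF (phiInf F) x)
    exact ⟨wittAuto F (cyc n), key x n hb⟩
  · intro x y
    obtain ⟨n, hbx⟩ := exists_BndB (GW.toF (phiInf F) x)
    obtain ⟨m, hby⟩ := exists_BndB (GW.toF (phiInf F) y)
    exact ⟨wittAuto F (cyc (max n m)),
      key x _ (BndB_mono (le_max_left n m) hbx),
      key y _ (BndB_mono (le_max_right n m) hby)⟩
  · rintro ⟨θ, hθ⟩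
    exact notsurj (hθ ▸ EquivLike.surjective θ)
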